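/- (Oscillation space equals Besov space) Let p, r, q ∈ [1,∞] with r ≤ p, and let σ be an admissible sequence with s̲(σ) > 0 and s̲(σ) − d/r > −d/p. If a family of wavelet coefficients (c_λ)_{λ∈Λ} satisfies (Σ_{λ∈Λ_j}(σ_j 2^{−jd/r}|c_λ|)^r)^{1/r} ∈ ℓ^q (in j), then also (Σ_{λ∈Λ_j}(σ_j 2^{−jd/r} d^p_λ)^r)^{1/r} ∈ ℓ^q, where d^p_λ = sup_{j'≥j}(Σ_{λ'∈Λ_{j'}, λ'⊂λ}(2^{(j−j')d/p}|c_{λ'}|)^p)^{1/p} is the p-wavelet leader of the dyadic cube λ ∈ Λ_j. -/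

import Mathlib

open MeasureTheory Filter Metric Topology
open scoped ENNReal NNReal

/-- A sequence of positive reals is admissible if consecutive terms are comparable. -/
def Admissible (σ : ℕ → ℝ) : Prop :=
  (∀ j, 0 < σ j) ∧ ∃ C > (0:ℝ), ∀ j, C⁻¹ * σ j ≤ σ (j + 1) ∧ σ (j + 1) ≤ C * σ j

noncomputable def lowerRatio (σ : ℕ → ℝ) (j : ℕ) : ℝ := ⨅ k : ℕ, σ (j + k) / σ k

noncomputable def upperRatio (σ : ℕ → ℝ) (j : ℕ) : ℝ := ⨆ k : ℕ, σ (j + k) / σ k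

/-- `s` is the lower Boyd index of `σ`. -/
def IsLowerBoyd (σ : ℕ → ℝ) (s : ℝ) : Prop :=
  Filter.Tendsto (fun j : ℕ => Real.logb 2 (lowerRatio σ j) / j) Filter.atTop (nhds s)

/-- `s` is the upper Boyd index of `σ`. -/
def IsUpperBoyd (σ : ℕ → ℝ) (s : ℝ) : Prop :=
  Filter.Tendsto (fun j : ℕ => Real.logb 2 (upperRatio σ j) / j) Filter.atTop (nhds s)

/-- The `ℓ^q` norm (with values in `ℝ≥0∞`) of a family of extended nonnegative reals. -/
noncomputable def lqNorm {ι : Type*} (q : ℝ≥0∞) (a : ι → ℝ≥0∞) : ℝ≥0∞ :=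
  if q = ∞ then ⨆ i, a i else (∑' i, a i ^ q.toReal) ^ (1 / q.toReal)

/-- `(j', k')` indexes a dyadic subcube of the dyadic cube indexed by `(j, k)`. -/
def IsSubcube (d : ℕ) (j : ℕ) (k : Fin d → ℤ) (j' : ℕ) (k' : Fin d → ℤ) : Prop :=
  ∀ i, k i * 2 ^ (j' - j) ≤ k' i ∧ k' i < (k i + 1) * 2 ^ (j' - j)

/-- The `p`-wavelet leader of the dyadic cube indexed by `(j, k)` for the coefficient
family `c`. -/
noncomputable def pLeader (d : ℕ) (p : ℝ≥0∞) (c : ℕ → (Fin d → ℤ) → ℝ)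
    (j : ℕ) (k : Fin d → ℤ) : ℝ≥0∞ :=
  ⨆ j' : ℕ, ⨆ _ : j ≤ j',
    lqNorm p (fun k' : {k' : Fin d → ℤ // IsSubcube d j k j' k'} =>
      ENNReal.ofReal ((2:ℝ) ^ (((j : ℝ) - (j' : ℝ)) * d / p.toReal) * |c j' k'.1|))

lemma one_le_toReal {r : ℝ≥0∞} (hr : 1 ≤ r) (hrt : r ≠ ∞) : 1 ≤ r.toReal := by
  rw [← ENNReal.toReal_one]; exact ENNReal.toReal_mono hrt hr

lemma lqNorm_anti {ι : Type*} (f : ι → ℝ≥0∞) {r p : ℝ≥0∞} (hr : 1 ≤ r) (hrp : r ≤ p) :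
    lqNorm p f ≤ lqNorm r f := by
  by_cases hrt : r = ∞
  · have hpt : p = ∞ := top_unique (hrt ▸ hrp)
    simp [lqNorm, hrt, hpt]
  have hrr : 1 ≤ r.toReal := one_le_toReal hr hrt
  have hrr0 : r.toReal ≠ 0 := by positivity
  have hS : ∀ i, f i ≤ (∑' i, f i ^ r.toReal) ^ (1 / r.toReal) := by
    intro i
    calc f i = (f i ^ r.toReal) ^ (1 / r.toReal) := by
          rw [← ENNReal.rpow_mul, mul_one_div, div_self hrr0, ENNReal.rpow_one]
      _ ≤ _ := ENNReal.rpow_le_rpow (ENNReal.le_tsum i)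
          (one_div_nonneg.2 ENNReal.toReal_nonneg)
  by_cases hpt : p = ∞
  · simp only [lqNorm, hpt, hrt, if_true, if_false]
    exact iSup_le hS
  simp only [lqNorm, hpt, hrt, if_false]
  set rr := r.toReal
  set pp := p.toReal
  have hpp : rr ≤ pp := ENNReal.toReal_mono hpt hrp
  have hrrpos : (0:ℝ) < rr := by linarith
  have hpppos : (0:ℝ) < pp := by linarith
  have hpp0 : pp ≠ 0 := ne_of_gt hpppos
  set S := ∑' i, f i ^ rr with hSdef
  rcases eq_or_ne S 0 with h0 | h0
  · have hfi : ∀ i, f i = 0 := by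
      intro i
      have := ENNReal.le_tsum (f := fun i => f i ^ rr) i
      rw [← hSdef, h0, le_zero_iff] at this
      rcases ENNReal.rpow_eq_zero_iff.mp this with ⟨h, -⟩ | ⟨-, h⟩
      · exact h
      · linarith
    simp only [hfi]
    rw [ENNReal.zero_rpow_of_pos hpppos, tsum_zero,
      ENNReal.zero_rpow_of_pos (by positivity : (0:ℝ) < 1/pp), h0,
      ENNReal.zero_rpow_of_pos (by positivity : (0:ℝ) < 1/rr)]
  rcases eq_or_ne S ∞ with htop | htop
  · rw [htop, ENNReal.top_rpow_of_pos (by positivity : (0:ℝ) < 1/rr)]; exact le_top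
  have key : ∀ i, f i ^ pp ≤ f i ^ rr * S ^ ((pp - rr)/rr) := by
    intro i
    rcases eq_or_ne (f i) 0 with hf0 | hf0
    · rw [hf0, ENNReal.zero_rpow_of_pos hpppos]; exact bot_le
    rcases eq_or_ne (f i) ∞ with hft | hft
    · exfalso
      apply htop
      have : f i ^ rr = ∞ := by rw [hft]; exact ENNReal.top_rpow_of_pos hrrpos
      exact eq_top_iff.2 (this ▸ ENNReal.le_tsum i)
    have : f i ^ pp = f i ^ rr * f i ^ (pp - rr) := by
      rw [← ENNReal.rpow_add _ _ hf0 hft]; ring_nf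
    rw [this]
    refine mul_le_mul_right ?_ _
    calc f i ^ (pp - rr) ≤ (S ^ (1/rr)) ^ (pp - rr) :=
          ENNReal.rpow_le_rpow (hS i) (by linarith)
      _ = S ^ ((pp - rr)/rr) := by rw [← ENNReal.rpow_mul]; ring_nf
  calc (∑' i, f i ^ pp) ^ (1/pp)
      ≤ (∑' i, f i ^ rr * S ^ ((pp - rr)/rr)) ^ (1/pp) :=
        ENNReal.rpow_le_rpow (ENNReal.tsum_le_tsum key) (by positivity : (0:ℝ) ≤ 1/pp)
    _ = (S * S ^ ((pp - rr)/rr)) ^ (1/pp) := by rw [ENNReal.tsum_mul_right]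
    _ = (S ^ (pp/rr)) ^ (1/pp) := by
        nth_rw 1 [← ENNReal.rpow_one S]
        rw [← ENNReal.rpow_add _ _ h0 htop]
        congr 2
        field_simp
        ring
    _ = S ^ (1/rr) := by
        rw [← ENNReal.rpow_mul]; congr 1; field_simp

lemma lqNorm_const_mul {ι : Type*} [Nonempty ι] {q : ℝ≥0∞} (hq : 1 ≤ q) (c : ℝ≥0∞) (f : ι → ℝ≥0∞) :
    lqNorm q (fun i => c * f i) = c * lqNorm q f := by
  by_cases hqt : q = ∞
  · simp only [lqNorm, hqt, if_true]
    exact (ENNReal.mul_iSup c f).symm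
  have hq1 : 1 ≤ q.toReal := by
    rw [← ENNReal.toReal_one]; exact ENNReal.toReal_mono hqt hq
  have hq0 : q.toReal ≠ 0 := by linarith
  simp only [lqNorm, hqt, if_false]
  have h1 : (∑' i, (c * f i) ^ q.toReal) = c ^ q.toReal * ∑' i, f i ^ q.toReal := by
    simp_rw [ENNReal.mul_rpow_of_nonneg _ _ (by linarith : (0:ℝ) ≤ q.toReal)]
    exact ENNReal.tsum_mul_left
  rw [h1, ENNReal.mul_rpow_of_nonneg _ _ (by positivity : (0:ℝ) ≤ 1/q.toReal),
    ← ENNReal.rpow_mul, mul_one_div, div_self hq0, ENNReal.rpow_one]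

lemma holder_tsum {ι : Type*} (f g : ι → ℝ≥0∞) {p q : ℝ} (hpq : p.HolderConjugate q) :
    ∑' i, f i * g i ≤ (∑' i, f i ^ p) ^ (1/p) * (∑' i, g i ^ q) ^ (1/q) := by
  rw [ENNReal.tsum_eq_iSup_sum]
  refine iSup_le fun s => ?_
  refine (ENNReal.inner_le_Lp_mul_Lq s f g hpq).trans ?_
  have h1 : (0:ℝ) ≤ 1/p := by rw [one_div]; exact hpq.inv_nonneg
  have h2 : (0:ℝ) ≤ 1/q := by rw [one_div]; exact hpq.symm.inv_nonneg
  exact mul_le_mul' (ENNReal.rpow_le_rpow (ENNReal.sum_le_tsum s) h1)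
    (ENNReal.rpow_le_rpow (ENNReal.sum_le_tsum s) h2)

lemma lqNorm_conv_finite {q : ℝ≥0∞} (hq : 1 ≤ q) (a b : ℕ → ℝ≥0∞) (W : ℕ → ℝ≥0∞)
    (hW : ∑' m, W m ≠ ∞) (hab : ∀ j, b j ≤ ∑' m, W m * a (j + m))
    (ha : lqNorm q a < ∞) : lqNorm q b < ∞ := by
  set SW := ∑' m, W m with hSW
  by_cases hqt : q = ∞
  · simp only [lqNorm, hqt, if_true] at ha ⊢
    have hb : ∀ j, b j ≤ SW * ⨆ i, a i := by
      intro j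
      refine (hab j).trans ?_
      rw [hSW, ← ENNReal.tsum_mul_right]
      exact ENNReal.tsum_le_tsum fun m => mul_le_mul_right (le_iSup a (j + m)) _
    exact lt_of_le_of_lt (iSup_le hb) (ENNReal.mul_lt_top hW.lt_top ha)
  have hqq : 1 ≤ q.toReal := by
    rw [← ENNReal.toReal_one]; exact ENNReal.toReal_mono hqt hq
  set qq := q.toReal with hqqdef
  have hT : (∑' j, a j ^ qq) < ∞ := by
    by_contra h
    rw [not_lt, top_le_iff] at h
    simp only [lqNorm, hqt, if_false, ← hqqdef, h] at ha
    rw [ENNReal.top_rpow_of_pos (by positivity : (0:ℝ) < 1/qq)] at ha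
    exact (lt_irrefl _ ha).elim
  set T := ∑' j, a j ^ qq with hTdef
  have hshift : ∀ m, (∑' j, a (j + m) ^ qq) ≤ T :=
    fun m => ENNReal.tsum_comp_le_tsum_of_injective (add_left_injective m) _
  suffices hkey : (∑' j, b j ^ qq) < ∞ by
    simp only [lqNorm, hqt, if_false, ← hqqdef]
    exact ENNReal.rpow_lt_top_of_nonneg (by positivity) hkey.ne
  rcases eq_or_lt_of_le hqq with hq1 | hq1
  · -- qq = 1
    simp only [← hq1, ENNReal.rpow_one]
    calc (∑' j, b j) ≤ ∑' j, ∑' m, W m * a (j + m) := ENNReal.tsum_le_tsum hab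
      _ = ∑' m, W m * ∑' j, a (j + m) := by
          rw [ENNReal.tsum_comm]; congr 1; ext m; rw [ENNReal.tsum_mul_left]
      _ ≤ ∑' m, W m * T := by
          refine ENNReal.tsum_le_tsum fun m => mul_le_mul_right ?_ _
          simpa [← hq1, ENNReal.rpow_one] using hshift m
      _ = SW * T := by rw [ENNReal.tsum_mul_right]
      _ < ∞ := ENNReal.mul_lt_top hW.lt_top hT
  · -- 1 < qq : Hölder
    have hconj : qq.HolderConjugate (Real.conjExponent qq) := .conjExponent hq1
    set qq' := Real.conjExponent qq with hqq'
    have hconj' : qq'.HolderConjugate qq := hconj.symm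
    have hq'pos : (0:ℝ) < qq' := hconj'.pos
    have hqpos : (0:ℝ) < qq := hconj.pos
    have hinv : 1/qq' + 1/qq = 1 := by
      rw [one_div, one_div]; exact hconj'.inv_add_inv_eq_one
    have holder : ∀ j, (∑' m, W m * a (j + m)) ≤
        SW ^ (1/qq') * (∑' m, W m * a (j + m) ^ qq) ^ (1/qq) := by
      intro j
      have h1 : ∀ m, W m * a (j + m)
          = (W m ^ (1/qq')) * (W m ^ (1/qq) * a (j + m)) := by
        intro m
        rw [← mul_assoc, ← ENNReal.rpow_add_of_nonneg _ _ (by positivity) (by positivity), hinv,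
          ENNReal.rpow_one]
      have h2 : ∀ m, (W m ^ (1/qq')) ^ qq' = W m := by
        intro m
        rw [← ENNReal.rpow_mul, one_div, inv_mul_cancel₀ hconj'.ne_zero, ENNReal.rpow_one]
      have h3 : ∀ m, (W m ^ (1/qq) * a (j + m)) ^ qq = W m * a (j + m) ^ qq := by
        intro m
        rw [ENNReal.mul_rpow_of_nonneg _ _ (by positivity : (0:ℝ) ≤ qq), ← ENNReal.rpow_mul,
          one_div, inv_mul_cancel₀ hconj.ne_zero, ENNReal.rpow_one]
      calc (∑' m, W m * a (j + m))
          = ∑' m, (W m ^ (1/qq')) * (W m ^ (1/qq) * a (j + m)) := by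
            exact tsum_congr h1
        _ ≤ (∑' m, (W m ^ (1/qq')) ^ qq') ^ (1/qq')
            * (∑' m, (W m ^ (1/qq) * a (j + m)) ^ qq) ^ (1/qq) :=
            holder_tsum _ _ hconj'
        _ = SW ^ (1/qq') * (∑' m, W m * a (j + m) ^ qq) ^ (1/qq) := by
            rw [tsum_congr h2, tsum_congr h3]
    have hbq : ∀ j, b j ^ qq ≤ SW ^ (qq/qq') * ∑' m, W m * a (j + m) ^ qq := by
      intro j
      calc b j ^ qq ≤ (SW ^ (1/qq') * (∑' m, W m * a (j + m) ^ qq) ^ (1/qq)) ^ qq :=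
            ENNReal.rpow_le_rpow ((hab j).trans (holder j)) (by positivity)
        _ = SW ^ (qq/qq') * ∑' m, W m * a (j + m) ^ qq := by
            rw [ENNReal.mul_rpow_of_nonneg _ _ (by positivity : (0:ℝ) ≤ qq),
              ← ENNReal.rpow_mul, ← ENNReal.rpow_mul, one_div_mul_eq_div,
              one_div, inv_mul_cancel₀ hconj.ne_zero, ENNReal.rpow_one]
    calc (∑' j, b j ^ qq) ≤ ∑' j, SW ^ (qq/qq') * ∑' m, W m * a (j + m) ^ qq :=
          ENNReal.tsum_le_tsum hbq
      _ = SW ^ (qq/qq') * ∑' j, ∑' m, W m * a (j + m) ^ qq := ENNReal.tsum_mul_left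
      _ = SW ^ (qq/qq') * ∑' m, W m * ∑' j, a (j + m) ^ qq := by
          congr 1
          rw [ENNReal.tsum_comm]; congr 1; ext m; rw [ENNReal.tsum_mul_left]
      _ ≤ SW ^ (qq/qq') * ∑' m, W m * T := by
          refine mul_le_mul_right (ENNReal.tsum_le_tsum fun m => mul_le_mul_right (hshift m) _) _
      _ = SW ^ (qq/qq') * (SW * T) := by rw [ENNReal.tsum_mul_right]
      _ < ∞ := ENNReal.mul_lt_top
          (ENNReal.rpow_lt_top_of_nonneg (by positivity) hW)
          (ENNReal.mul_lt_top hW.lt_top hT)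

lemma ediv_eq_of_between {b x q : ℤ} (hb : 0 < b) (h1 : q * b ≤ x) (h2 : x < (q+1)*b) :
    x / b = q := by
  have h3 := Int.mul_ediv_add_emod x b
  have h4 := Int.emod_nonneg x hb.ne'
  have h5 := Int.emod_lt_of_pos x hb
  set e := x / b with he
  rcases lt_trichotomy e q with h | h | h
  · have : (e+1)*b ≤ q*b := mul_le_mul_of_nonneg_right (by omega) hb.le
    nlinarith
  · exact h
  · have : (q+1)*b ≤ e*b := mul_le_mul_of_nonneg_right (by omega) hb.le
    nlinarith

/-- the subcubes of all cubes at level j partition level j'. -/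
noncomputable def subcubeEquiv (d j j' : ℕ) :
    (Σ k : Fin d → ℤ, {k' : Fin d → ℤ // IsSubcube d j k j' k'}) ≃ (Fin d → ℤ) where
  toFun x := x.2.1
  invFun k' := ⟨fun i => k' i / 2 ^ (j' - j),
    ⟨k', fun i => by
      constructor
      · exact Int.ediv_mul_le (k' i) (by positivity)
      · exact Int.lt_ediv_add_one_mul_self (k' i) (by positivity)⟩⟩
  left_inv := by
    rintro ⟨k, k', hk'⟩
    have hk : ∀ i, k' i / 2 ^ (j' - j) = k i := fun i =>
      ediv_eq_of_between (by positivity) (hk' i).1 (hk' i).2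
    exact Sigma.subtype_ext (funext hk) rfl
  right_inv k' := rfl

lemma tsum_subcube (d j j' : ℕ) (f : (Fin d → ℤ) → ℝ≥0∞) :
    ∑' k : Fin d → ℤ, ∑' k' : {k' : Fin d → ℤ // IsSubcube d j k j' k'}, f k'.1
      = ∑' k' : Fin d → ℤ, f k' := by
  exact (ENNReal.tsum_sigma' (fun x : Σ k : Fin d → ℤ, {k' : Fin d → ℤ // IsSubcube d j k j' k'} => f x.2.1)).symm.trans ((subcubeEquiv d j j').tsum_eq f)

lemma exists_pos_lb (g : ℕ → ℝ) (hg : ∀ m, 0 < g m) (M : ℕ) : ∃ A > (0:ℝ), ∀ m < M, A ≤ g m := by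
  induction M with
  | zero => exact ⟨1, one_pos, fun m h => absurd h (Nat.not_lt_zero m)⟩
  | succ M ih =>
    obtain ⟨A, hA, h⟩ := ih
    refine ⟨min A (g M), lt_min hA (hg M), fun m hm => ?_⟩
    rcases Nat.lt_succ_iff_lt_or_eq.mp hm with h' | h'
    · exact (min_le_left _ _).trans (h m h')
    · subst h'; exact min_le_right _ _

lemma boyd_bound (σ : ℕ → ℝ) (hσ : Admissible σ) {sl ε : ℝ} (hl : IsLowerBoyd σ sl)
    (hε : 0 < ε) :
    ∃ K > (0:ℝ), ∀ j m : ℕ, σ j ≤ K * 2 ^ (-(m:ℝ) * (sl - ε)) * σ (j + m) := by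
  obtain ⟨hpos, C, hC, hCs⟩ := hσ
  -- step 1 : σ (m + k) ≥ C⁻¹ ^ m * σ k
  have step1 : ∀ m k : ℕ, C⁻¹ ^ m * σ k ≤ σ (m + k) := by
    intro m
    induction m with
    | zero => intro k; simp
    | succ m ih =>
      intro k
      have h1 : C⁻¹ * σ (m + k) ≤ σ (m + k + 1) := (hCs (m + k)).1
      have h2 : C⁻¹ * (C⁻¹ ^ m * σ k) ≤ C⁻¹ * σ (m + k) :=
        mul_le_mul_of_nonneg_left (ih k) (by positivity)
      calc C⁻¹ ^ (m+1) * σ k = C⁻¹ * (C⁻¹ ^ m * σ k) := by ring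
        _ ≤ σ (m + k + 1) := h2.trans h1
        _ = σ (m + 1 + k) := by ring_nf
  have hbdd : ∀ m : ℕ, BddBelow (Set.range fun k => σ (m + k) / σ k) := by
    intro m
    exact ⟨0, by rintro x ⟨k, rfl⟩; exact div_nonneg (hpos _).le (hpos _).le⟩
  have step2 : ∀ m : ℕ, C⁻¹ ^ m ≤ lowerRatio σ m := by
    intro m
    refine le_ciInf fun k => ?_
    rw [le_div_iff₀ (hpos k)]
    exact step1 m k
  have LRpos : ∀ m, 0 < lowerRatio σ m := fun m => lt_of_lt_of_le (by positivity) (step2 m)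
  -- step 3 : eventually lowerRatio σ m ≥ 2 ^ (m * (sl - ε))
  have step3 : ∀ᶠ m : ℕ in atTop, (2:ℝ) ^ ((m:ℝ) * (sl - ε)) ≤ lowerRatio σ m := by
    have h1 : ∀ᶠ m : ℕ in atTop, sl - ε < Real.logb 2 (lowerRatio σ m) / m :=
      hl.eventually (eventually_gt_nhds (by linarith))
    filter_upwards [h1, eventually_ge_atTop 1] with m hm hm1
    have hm0 : (0:ℝ) < m := by exact_mod_cast hm1
    have : (m:ℝ) * (sl - ε) ≤ Real.logb 2 (lowerRatio σ m) := by
      rw [mul_comm]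
      calc (sl - ε) * m ≤ Real.logb 2 (lowerRatio σ m) / m * m :=
            mul_le_mul_of_nonneg_right hm.le hm0.le
        _ = Real.logb 2 (lowerRatio σ m) := by field_simp
    exact ((Real.le_logb_iff_rpow_le one_lt_two (LRpos m)).mp this)
  obtain ⟨M, hM⟩ := eventually_atTop.mp step3
  obtain ⟨A, hA, hAle⟩ := exists_pos_lb
    (fun m => lowerRatio σ m / 2 ^ ((m:ℝ) * (sl - ε)))
    (fun m => div_pos (LRpos m) (by positivity)) M
  set K0 := min A 1 with hK0
  have hK0pos : 0 < K0 := lt_min hA one_pos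
  have key : ∀ m : ℕ, K0 * 2 ^ ((m:ℝ) * (sl - ε)) ≤ lowerRatio σ m := by
    intro m
    rcases lt_or_ge m M with h | h
    · have := hAle m h
      rw [le_div_iff₀ (by positivity)] at this
      calc K0 * 2 ^ ((m:ℝ) * (sl - ε)) ≤ A * 2 ^ ((m:ℝ) * (sl - ε)) :=
            mul_le_mul_of_nonneg_right (min_le_left _ _) (by positivity)
        _ ≤ lowerRatio σ m := this
    · calc K0 * 2 ^ ((m:ℝ) * (sl - ε)) ≤ 1 * 2 ^ ((m:ℝ) * (sl - ε)) :=
            mul_le_mul_of_nonneg_right (min_le_right _ _) (by positivity)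
      _ = 2 ^ ((m:ℝ) * (sl - ε)) := one_mul _
      _ ≤ lowerRatio σ m := hM m h
  refine ⟨K0⁻¹, by positivity, fun j m => ?_⟩
  have h1 : K0 * 2 ^ ((m:ℝ) * (sl - ε)) ≤ σ (m + j) / σ j := (key m).trans (ciInf_le (hbdd m) j)
  rw [le_div_iff₀ (hpos j)] at h1
  have h2pos : (0:ℝ) < 2 ^ ((m:ℝ) * (sl - ε)) := by positivity
  have hrw : (2:ℝ) ^ (-(m:ℝ) * (sl - ε)) = (2 ^ ((m:ℝ) * (sl - ε)))⁻¹ := by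
    rw [neg_mul, Real.rpow_neg (by norm_num : (0:ℝ) ≤ 2)]
  rw [hrw, show j + m = m + j from Nat.add_comm j m]
  calc σ j = K0⁻¹ * (2 ^ ((m:ℝ) * (sl - ε)))⁻¹ * (K0 * 2 ^ ((m:ℝ) * (sl - ε)) * σ j) := by
        field_simp
    _ ≤ K0⁻¹ * (2 ^ ((m:ℝ) * (sl - ε)))⁻¹ * σ (m + j) :=
        mul_le_mul_of_nonneg_left h1 (by positivity)

instance subcube_nonempty (d j : ℕ) (k : Fin d → ℤ) (j' : ℕ) :
    Nonempty {k' : Fin d → ℤ // IsSubcube d j k j' k'} := by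
  refine ⟨⟨fun i => k i * 2 ^ (j' - j), fun i => ⟨le_refl _, ?_⟩⟩⟩
  exact mul_lt_mul_of_pos_right (lt_add_one _) (by positivity)

section
variable {ι : Type*}
end


lemma pointwise_bound (d : ℕ) (p r : ℝ≥0∞) (hr1 : 1 ≤ r) (hrp : r ≤ p)
    (σ : ℕ → ℝ) (hpos : ∀ j, 0 < σ j) (c : ℕ → (Fin d → ℤ) → ℝ)
    {K e : ℝ} (hK : 0 < K)
    (hσb : ∀ j m : ℕ, σ j ≤ K * 2 ^ (-(m:ℝ) * e) * σ (j + m)) (j : ℕ) :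
    lqNorm r (fun k : Fin d → ℤ =>
      ENNReal.ofReal (σ j * (2:ℝ) ^ (-(j : ℝ) * d / r.toReal)) * pLeader d p c j k)
    ≤ ∑' m : ℕ, ENNReal.ofReal (K * 2 ^ (-(m:ℝ) * (e + d/p.toReal - d/r.toReal)))
        * lqNorm r (fun k : Fin d → ℤ =>
            ENNReal.ofReal (σ (j+m) * (2:ℝ) ^ (-((j+m : ℕ) : ℝ) * d / r.toReal) * |c (j+m) k|)) := by
  set rr := r.toReal with hrr
  set pp := p.toReal with hpp
  set δ : ℝ := e + d/pp - d/rr with hδ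
  -- the scalar inequality
  have scalar : ∀ m : ℕ, σ j * 2 ^ (-(j:ℝ) * d / rr) * 2 ^ (-(m:ℝ) * d / pp)
      ≤ K * 2 ^ (-(m:ℝ) * δ) * (σ (j+m) * 2 ^ (-((j+m : ℕ) : ℝ) * d / rr)) := by
    intro m
    have two_pos : (0:ℝ) < 2 := by norm_num
    have rpm : ∀ x y : ℝ, (2:ℝ) ^ x * (2:ℝ) ^ y = 2 ^ (x + y) :=
      fun x y => (Real.rpow_add two_pos x y).symm
    calc σ j * 2 ^ (-(j:ℝ) * d / rr) * 2 ^ (-(m:ℝ) * d / pp)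
        = σ j * 2 ^ (-(j:ℝ) * d / rr + -(m:ℝ) * d / pp) := by
          rw [mul_assoc, rpm]
      _ ≤ (K * 2 ^ (-(m:ℝ) * e) * σ (j + m)) * 2 ^ (-(j:ℝ) * d / rr + -(m:ℝ) * d / pp) :=
          mul_le_mul_of_nonneg_right (hσb j m) (by positivity)
      _ = K * σ (j+m) * (2 ^ (-(m:ℝ) * e) * 2 ^ (-(j:ℝ) * d / rr + -(m:ℝ) * d / pp)) := by
          ring
      _ = K * σ (j+m) * 2 ^ (-(m:ℝ) * e + (-(j:ℝ) * d / rr + -(m:ℝ) * d / pp)) := by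
          rw [rpm]
      _ = K * σ (j+m) * 2 ^ (-(m:ℝ) * δ + -((j+m : ℕ) : ℝ) * d / rr) := by
          rw [show -(m:ℝ) * e + (-(j:ℝ) * d / rr + -(m:ℝ) * d / pp)
              = -(m:ℝ) * δ + -((j+m : ℕ) : ℝ) * d / rr by
            push_cast [hδ]; ring]
      _ = K * σ (j+m) * (2 ^ (-(m:ℝ) * δ) * 2 ^ (-((j+m : ℕ) : ℝ) * d / rr)) := by
          rw [rpm]
      _ = K * 2 ^ (-(m:ℝ) * δ) * (σ (j+m) * 2 ^ (-((j+m : ℕ) : ℝ) * d / rr)) := by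
          ring
  by_cases hrt : r = ∞
  · -- then p = ∞ as well
    have hpt : p = ∞ := top_unique (hrt ▸ hrp)
    have hrr0 : rr = 0 := by rw [hrr, hrt]; simp
    have hpp0 : pp = 0 := by rw [hpp, hpt]; simp
    simp only [lqNorm, hrt, hpt, if_true, pLeader, ENNReal.mul_iSup]
    refine iSup_le fun k => iSup_le fun j' => iSup_le fun hjj' => iSup_le fun k' => ?_
    obtain ⟨m, rfl⟩ := Nat.exists_eq_add_of_le hjj'
    rw [show ((⊤:ℝ≥0∞)).toReal = pp by rw [hpp0, ENNReal.toReal_top]]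
    have key : ENNReal.ofReal (σ j * 2 ^ (-(j:ℝ) * d / rr))
          * ENNReal.ofReal (2 ^ (((j:ℝ) - ((j+m : ℕ) : ℝ)) * d / pp) * |c (j+m) k'.1|)
        ≤ ENNReal.ofReal (K * 2 ^ (-(m:ℝ) * δ))
          * ENNReal.ofReal (σ (j+m) * 2 ^ (-((j+m : ℕ) : ℝ) * d / rr) * |c (j+m) k'.1|) := by
      rw [← ENNReal.ofReal_mul (mul_nonneg (hpos j).le (by positivity)),
        ← ENNReal.ofReal_mul (mul_nonneg hK.le (by positivity))]
      refine ENNReal.ofReal_le_ofReal ?_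
      have h1 := mul_le_mul_of_nonneg_right (scalar m) (abs_nonneg (c (j+m) k'.1))
      calc σ j * 2 ^ (-(j:ℝ) * d / rr) * (2 ^ (((j:ℝ) - ((j+m : ℕ) : ℝ)) * d / pp) * |c (j+m) k'.1|)
          = σ j * 2 ^ (-(j:ℝ) * d / rr) * 2 ^ (-(m:ℝ) * d / pp) * |c (j+m) k'.1| := by
            rw [show ((j:ℝ) - ((j+m : ℕ) : ℝ)) * d / pp = -(m:ℝ) * d / pp by push_cast; ring]
            ring
        _ ≤ K * 2 ^ (-(m:ℝ) * δ) * (σ (j+m) * 2 ^ (-((j+m : ℕ) : ℝ) * d / rr)) * |c (j+m) k'.1| := h1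
        _ = K * 2 ^ (-(m:ℝ) * δ) * (σ (j+m) * 2 ^ (-((j+m : ℕ) : ℝ) * d / rr) * |c (j+m) k'.1|) := by
            ring
    exact le_trans key (le_trans
      (le_iSup (fun kk : Fin d → ℤ => ENNReal.ofReal (K * 2 ^ (-(m:ℝ) * δ)) *
        ENNReal.ofReal (σ (j+m) * 2 ^ (-((j+m : ℕ) : ℝ) * d / rr) * |c (j+m) kk|)) k'.1)
      (ENNReal.le_tsum m))
  · -- r finite
    have hrr1 : 1 ≤ rr := one_le_toReal hr1 hrt
    have hrrpos : (0:ℝ) < rr := by linarith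
    have hrr0 : rr ≠ 0 := ne_of_gt hrrpos
    set F : ℝ≥0∞ := ENNReal.ofReal (σ j * 2 ^ (-(j:ℝ) * d / rr)) with hF
    set G : ℕ → ℝ≥0∞ := fun m => ENNReal.ofReal (2 ^ (-(m:ℝ) * d / pp)) with hG
    set W : ℕ → ℝ≥0∞ := fun m => ENNReal.ofReal (K * 2 ^ (-(m:ℝ) * δ)) with hW
    set H : ℕ → ℝ≥0∞ := fun j' => ENNReal.ofReal (σ j' * 2 ^ (-(j' : ℝ) * d / rr)) with hH
    set T : (Fin d → ℤ) → ℕ → ℝ≥0∞ := fun k m =>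
      ∑' k' : {k' : Fin d → ℤ // IsSubcube d j k (j+m) k'},
        ENNReal.ofReal |c (j+m) k'.1| ^ rr with hT
    set U : ℕ → ℝ≥0∞ := fun j' => ∑' k' : Fin d → ℤ, ENNReal.ofReal |c j' k'| ^ rr with hU
    set A : ℕ → ℝ≥0∞ := fun j' =>
      ∑' k : Fin d → ℤ,
        ENNReal.ofReal (σ j' * 2 ^ (-(j' : ℝ) * d / rr) * |c j' k|) ^ rr with hA
    -- substep i : bound on the leader
    have stepL : ∀ k : Fin d → ℤ, pLeader d p c j k ≤ (∑' m, G m ^ rr * T k m) ^ (1/rr) := by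
      intro k
      refine iSup_le fun j' => iSup_le fun hjj' => ?_
      obtain ⟨m, rfl⟩ := Nat.exists_eq_add_of_le hjj'
      have hsplit : (fun k' : {k' : Fin d → ℤ // IsSubcube d j k (j+m) k'} =>
          ENNReal.ofReal ((2:ℝ) ^ (((j : ℝ) - ((j+m : ℕ) : ℝ)) * d / pp) * |c (j+m) k'.1|))
          = fun k' : {k' : Fin d → ℤ // IsSubcube d j k (j+m) k'} =>
            G m * ENNReal.ofReal |c (j+m) k'.1| := by
        funext k'
        rw [show ((j:ℝ) - ((j+m : ℕ) : ℝ)) * d / pp = -(m:ℝ) * d / pp by push_cast; ring,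
          ENNReal.ofReal_mul (by positivity)]
      rw [hsplit, lqNorm_const_mul (le_trans hr1 hrp) (G m)]
      have h2 : lqNorm p (fun k' : {k' : Fin d → ℤ // IsSubcube d j k (j+m) k'} =>
            ENNReal.ofReal |c (j+m) k'.1|)
          ≤ T k m ^ (1/rr) := by
        refine le_trans (lqNorm_anti _ hr1 hrp) ?_
        simp only [lqNorm, hrt, if_false, ← hrr]
        exact le_refl _
      calc G m * lqNorm p (fun k' : {k' : Fin d → ℤ // IsSubcube d j k (j+m) k'} =>
            ENNReal.ofReal |c (j+m) k'.1|)
          ≤ G m * T k m ^ (1/rr) := mul_le_mul_right h2 _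
        _ = (G m ^ rr * T k m) ^ (1/rr) := by
            rw [ENNReal.mul_rpow_of_nonneg _ _ (by positivity : (0:ℝ) ≤ 1/rr),
              ← ENNReal.rpow_mul, mul_one_div, div_self hrr0, ENNReal.rpow_one]
        _ ≤ (∑' m', G m' ^ rr * T k m') ^ (1/rr) :=
            ENNReal.rpow_le_rpow (ENNReal.le_tsum m) (by positivity)
    -- substep iii-iv : sum over k
    have claim1 : (∑' k : Fin d → ℤ, (F * pLeader d p c j k) ^ rr)
        ≤ ∑' m, (W m * H (j+m)) ^ rr * U (j+m) := by
      have h1 : ∀ k : Fin d → ℤ, (F * pLeader d p c j k) ^ rr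
          ≤ ∑' m, F ^ rr * (G m ^ rr * T k m) := by
        intro k
        calc (F * pLeader d p c j k) ^ rr
            ≤ (F * (∑' m, G m ^ rr * T k m) ^ (1/rr)) ^ rr :=
              ENNReal.rpow_le_rpow (mul_le_mul_right (stepL k) _) (by positivity)
          _ = F ^ rr * ∑' m, G m ^ rr * T k m := by
              rw [ENNReal.mul_rpow_of_nonneg _ _ (le_of_lt hrrpos), ← ENNReal.rpow_mul,
                one_div, inv_mul_cancel₀ hrr0, ENNReal.rpow_one]
          _ = ∑' m, F ^ rr * (G m ^ rr * T k m) := ENNReal.tsum_mul_left.symm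
      calc (∑' k : Fin d → ℤ, (F * pLeader d p c j k) ^ rr)
          ≤ ∑' k : Fin d → ℤ, ∑' m, F ^ rr * (G m ^ rr * T k m) := ENNReal.tsum_le_tsum h1
        _ = ∑' m, ∑' k : Fin d → ℤ, F ^ rr * (G m ^ rr * T k m) := ENNReal.tsum_comm
        _ = ∑' m, F ^ rr * G m ^ rr * ∑' k : Fin d → ℤ, T k m := by
            refine tsum_congr fun m => ?_
            rw [← ENNReal.tsum_mul_left]
            refine tsum_congr fun k => by ring
        _ = ∑' m, F ^ rr * G m ^ rr * U (j+m) := by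
            refine tsum_congr fun m => ?_
            congr 1
            rw [hT, hU]
            exact tsum_subcube d j (j+m) (fun k' => ENNReal.ofReal |c (j+m) k'| ^ rr)
        _ ≤ ∑' m, (W m * H (j+m)) ^ rr * U (j+m) := by
            refine ENNReal.tsum_le_tsum fun m => ?_
            refine mul_le_mul_left ?_ _
            have hFG : F * G m ≤ W m * H (j+m) := by
              rw [hF, hG, hW, hH, ← ENNReal.ofReal_mul (mul_nonneg (hpos j).le (by positivity)),
                ← ENNReal.ofReal_mul (mul_nonneg hK.le (by positivity))]
              exact ENNReal.ofReal_le_ofReal (scalar m)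
            calc F ^ rr * G m ^ rr = (F * G m) ^ rr := by
                  rw [ENNReal.mul_rpow_of_nonneg _ _ (le_of_lt hrrpos)]
              _ ≤ (W m * H (j+m)) ^ rr := ENNReal.rpow_le_rpow hFG (le_of_lt hrrpos)
    -- now conclude
    have hAsplit : ∀ j', A j' = H j' ^ rr * U j' := by
      intro j'
      rw [hA, hH, hU, ← ENNReal.tsum_mul_left]
      refine tsum_congr fun k => ?_
      rw [ENNReal.ofReal_mul (mul_nonneg (hpos _).le (by positivity)),
        ENNReal.mul_rpow_of_nonneg _ _ (le_of_lt hrrpos)]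
    have ha : ∀ j', lqNorm r (fun k : Fin d → ℤ =>
        ENNReal.ofReal (σ j' * (2:ℝ) ^ (-(j' : ℝ) * d / rr) * |c j' k|)) = A j' ^ (1/rr) := by
      intro j'
      simp only [lqNorm, hrt, if_false, ← hrr, hA]
    have lhs_eq : lqNorm r (fun k : Fin d → ℤ => F * pLeader d p c j k)
        = (∑' k : Fin d → ℤ, (F * pLeader d p c j k) ^ rr) ^ (1/rr) := by
      simp only [lqNorm, hrt, if_false, ← hrr]
    have rhs_eq : ∀ m : ℕ,
        ENNReal.ofReal (K * 2 ^ (-(m:ℝ) * δ)) * lqNorm r (fun k : Fin d → ℤ =>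
          ENNReal.ofReal (σ (j+m) * (2:ℝ) ^ (-((j+m : ℕ) : ℝ) * d / rr) * |c (j+m) k|))
        = W m * A (j+m) ^ (1/rr) := fun m => by rw [ha (j+m), hW]
    rw [lhs_eq, tsum_congr rhs_eq]
    have final : (∑' k : Fin d → ℤ, (F * pLeader d p c j k) ^ rr)
        ≤ (∑' m, W m * A (j+m) ^ (1/rr)) ^ rr := by
      refine le_trans claim1 ?_
      have h3 : ∀ m, (W m * H (j+m)) ^ rr * U (j+m) = (W m * A (j+m) ^ (1/rr)) ^ rr := by
        intro m
        rw [ENNReal.mul_rpow_of_nonneg _ _ (le_of_lt hrrpos),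
          ENNReal.mul_rpow_of_nonneg _ _ (le_of_lt hrrpos), hAsplit (j+m),
          ← ENNReal.rpow_mul, one_div, inv_mul_cancel₀ hrr0, ENNReal.rpow_one, mul_assoc]
      rw [tsum_congr h3]
      set x : ℕ → ℝ≥0∞ := fun m => W m * A (j+m) ^ (1/rr) with hx
      have h4 : (∑' m, x m ^ rr) ^ (1/rr) ≤ ∑' m, x m := by
        have := lqNorm_anti x (le_refl (1:ℝ≥0∞)) hr1
        simp only [lqNorm, hrt, if_false, ENNReal.toReal_one, ENNReal.rpow_one, div_one,
          ← hrr] at this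
        simpa using this
      calc (∑' m, x m ^ rr) = ((∑' m, x m ^ rr) ^ (1/rr)) ^ rr := by
            rw [← ENNReal.rpow_mul, one_div, inv_mul_cancel₀ hrr0, ENNReal.rpow_one]
        _ ≤ (∑' m, x m) ^ rr := ENNReal.rpow_le_rpow h4 (le_of_lt hrrpos)
    calc (∑' k : Fin d → ℤ, (F * pLeader d p c j k) ^ rr) ^ (1/rr)
        ≤ ((∑' m, W m * A (j+m) ^ (1/rr)) ^ rr) ^ (1/rr) :=
          ENNReal.rpow_le_rpow final (one_div_nonneg.2 (le_of_lt hrrpos))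
      _ = ∑' m, W m * A (j+m) ^ (1/rr) := by
          rw [← ENNReal.rpow_mul, mul_one_div, div_self hrr0, ENNReal.rpow_one]

/-- a Besov-type bound on wavelet coefficients implies the same bound
for the `p`-wavelet leaders (oscillation space = Besov space, one inclusion). -/
theorem besov_implies_oscillation (d : ℕ) (p r q : ℝ≥0∞)
    (hr1 : 1 ≤ r) (hrp : r ≤ p) (hq : 1 ≤ q)
    (σ : ℕ → ℝ) (hσ : Admissible σ) (sl : ℝ) (hl : IsLowerBoyd σ sl)
    (hs0 : 0 < sl) (hcond : -((d : ℝ) / p.toReal) < sl - (d : ℝ) / r.toReal)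
    (c : ℕ → (Fin d → ℤ) → ℝ)
    (hc : lqNorm q (fun j : ℕ => lqNorm r (fun k : Fin d → ℤ =>
      ENNReal.ofReal (σ j * (2:ℝ) ^ (-(j : ℝ) * d / r.toReal) * |c j k|))) < ∞) :
    lqNorm q (fun j : ℕ => lqNorm r (fun k : Fin d → ℤ =>
      ENNReal.ofReal (σ j * (2:ℝ) ^ (-(j : ℝ) * d / r.toReal)) * pLeader d p c j k)) < ∞ := by
  obtain ⟨hpos, hC⟩ := hσ
  -- choose the constants
  set rr := r.toReal with hrr
  set pp := p.toReal with hpp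
  set δ0 : ℝ := sl + (d:ℝ)/pp - (d:ℝ)/rr with hδ0
  have hδ0pos : 0 < δ0 := by rw [hδ0]; linarith [hcond]
  set ε : ℝ := δ0 / 2 with hε
  have hεpos : 0 < ε := by positivity
  obtain ⟨K, hK, hσb⟩ := boyd_bound σ ⟨hpos, hC⟩ hl hεpos
  set e : ℝ := sl - ε with he
  set δ : ℝ := e + (d:ℝ)/pp - (d:ℝ)/rr with hδ
  have hδpos : 0 < δ := by rw [hδ, he]; rw [hδ0] at hε; linarith
  -- the weights
  set W : ℕ → ℝ≥0∞ := fun m => ENNReal.ofReal (K * 2 ^ (-(m:ℝ) * δ)) with hW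
  have hWsum : ∑' m, W m ≠ ∞ := by
    have hWeq : ∀ m : ℕ, W m = ENNReal.ofReal K * ENNReal.ofReal (2 ^ (-δ)) ^ m := by
      intro m
      show ENNReal.ofReal (K * 2 ^ (-(m:ℝ) * δ)) = ENNReal.ofReal K * ENNReal.ofReal (2 ^ (-δ)) ^ m
      rw [ENNReal.ofReal_mul hK.le, ← ENNReal.ofReal_pow (by positivity)]
      congr 2
      rw [← Real.rpow_natCast ((2:ℝ) ^ (-δ)) m, ← Real.rpow_mul (by norm_num)]
      congr 1
      ring
    rw [tsum_congr hWeq, ENNReal.tsum_mul_left, ENNReal.tsum_geometric]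
    refine ENNReal.mul_ne_top ENNReal.ofReal_ne_top ?_
    rw [Ne, ENNReal.inv_eq_top, tsub_eq_zero_iff_le]
    intro h
    have h2 : (2:ℝ) ^ (-δ) < 1 := by
      rw [← Real.rpow_zero 2]
      exact Real.rpow_lt_rpow_left_iff one_lt_two |>.mpr (by linarith)
    have := ENNReal.one_le_ofReal.mp h
    linarith
  refine lqNorm_conv_finite hq _ _ W hWsum ?_ hc
  intro j
  exact pointwise_bound d p r hr1 hrp σ hpos c hK hσb j
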